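/- If a ≤ n < δ, then w(n) − δ belongs to W0; more precisely, w(n) − δ = w(n − (δ − a)). -/
import Mathlib


/-- `w a b δ n = n + a⌊n/a⌋ + b⌊n/δ⌋`. -/
def w (a b δ n : ℕ) : ℕ := n + a * (n / a) + b * (n / δ)

/-- If `a ≤ n < δ`, then `w n - δ ∈ W0`; more precisely `w n - δ = w (n - (δ - a))`. -/
theorem stmt_3 (a δ : ℕ) (ha : 0 < a) (hlt : a < δ) (hlt2 : δ < 2 * a)
    (hgcd : Nat.gcd a δ = 1) (b : ℕ) (hb : b = a + δ) :
    ∀ n : ℕ, a ≤ n → n < δ →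
      w a b δ n - δ ∈ Set.range (w a b δ) ∧
      w a b δ n - δ = w a b δ (n - (δ - a)) := by
  intro n h1 h2
  have hna : n / a = 1 := by
    apply Nat.div_eq_of_lt_le <;> omega
  have hnd : n / δ = 0 := Nat.div_eq_of_lt h2
  have hma : (n - (δ - a)) / a = 0 := Nat.div_eq_of_lt (by omega)
  have hmd : (n - (δ - a)) / δ = 0 := Nat.div_eq_of_lt (by omega)
  have key : w a b δ n - δ = w a b δ (n - (δ - a)) := by
    simp [w, hna, hnd, hma, hmd]; omega
  exact ⟨key ▸ ⟨_, rfl⟩, key⟩
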